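/- Let n ≥ 2 and let b_1,…,b_n ≥ 2 and c_1,…,c_n ≥ 1 be integers. If B_{n−1} ∩ C_n ∩ C_{n−1} ≠ ∅, then b_n > (1 + 1/c_n) · (c_{n−1} + 1 + [0;c_{n−2},…,c_1]) · (1 − [0;b_{n−1},…,b_1]) − 1, where [0;c_{n−2},…,c_1] and [0;b_{n−1},…,b_1] are the continued fractions of the reversed sequences. -/
import Mathlib


noncomputable section

namespace ShulgaPaper

open Filter Topology

/-- The value of the finite continued fraction `[0; a₁, …, aₙ]`
(the empty continued fraction has value `0`). -/
def cf : List ℕ → ℝ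
  | [] => 0
  | a :: l => 1 / ((a : ℝ) + cf l)

/-- Iterates of the Gauss map, starting from the fractional part of `x`. -/
def gaussIter (x : ℝ) : ℕ → ℝ
  | 0 => Int.fract x
  | n + 1 => Int.fract (1 / gaussIter x n)

/-- The `n`-th partial quotient `aₙ(x)` of the continued fraction expansion of `x`
(for `n ≥ 1`; a junk value is returned if it is undefined). -/
def pq (x : ℝ) (n : ℕ) : ℕ := ⌊1 / gaussIter x (n - 1)⌋₊

/-- The `n`-th partial quotient `aₙ(x)` of `x` is defined (`n ≥ 1`), i.e. `n` does not
exceed the length of the continued fraction expansion of `x`. -/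
def pqDefined (x : ℝ) (n : ℕ) : Prop := gaussIter x (n - 1) ≠ 0

/-- The set `G` of real numbers that are rational or whose partial quotients diverge. -/
def G : Set ℝ :=
  {x | (∃ q : ℚ, x = (q : ℝ)) ∨ Tendsto (fun n => pq x n) atTop atTop}

/-- The list of pairs `(b_k, c_k)`, `k = 1, …, n`, produced by (a totalized version of)
Shulga's algorithm applied to `α`. -/
def shulgaList (α : ℝ) : ℕ → List (ℕ × ℕ)
  | 0 => []
  | n + 1 =>
      let L := shulgaList α n
      let b := pq (α - cf (L.map Prod.snd)) (n + 1) + 1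
      let c := pq (α - cf (L.map Prod.fst ++ [b])) (n + 1)
      L ++ [(b, c)]

/-- The list `[b₁, …, bₙ]` of Shulga's algorithm applied to `α`. -/
def bList (α : ℝ) (n : ℕ) : List ℕ := (shulgaList α n).map Prod.fst

/-- The list `[c₁, …, cₙ]` of Shulga's algorithm applied to `α`. -/
def cList (α : ℝ) (n : ℕ) : List ℕ := (shulgaList α n).map Prod.snd

/-- `bₙ` of Shulga's algorithm applied to `α` (for `n ≥ 1`). -/
def shulgaB (α : ℝ) (n : ℕ) : ℕ := ((shulgaList α n).getLast?.getD (0, 0)).1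

/-- `cₙ` of Shulga's algorithm applied to `α` (for `n ≥ 1`). -/
def shulgaC (α : ℝ) (n : ℕ) : ℕ := ((shulgaList α n).getLast?.getD (0, 0)).2

/-- The first `n` steps of Shulga's algorithm applied to `α` are defined: for each step
`k + 1 ≤ n`, the partial quotients `a_{k+1}(α - [0;c₁,…,c_k])` and
`a_{k+1}(α - [0;b₁,…,b_{k+1}])` defining `b_{k+1}` and `c_{k+1}` exist
(in particular the algorithm has not stopped before step `n`). -/
def shulgaDefined (α : ℝ) (n : ℕ) : Prop :=
  ∀ k < n, pqDefined (α - cf (cList α k)) (k + 1) ∧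
    pqDefined (α - cf (bList α (k + 1))) (k + 1)

/-- The half-open interval whose included endpoint is `x` and excluded endpoint is `y`,
the smaller one being the left endpoint. -/
def hIco (x y : ℝ) : Set ℝ := if x ≤ y then Set.Ico x y else Set.Ioc y x

/-- The list `[a 1, …, a n]`. -/
def listOf (a : ℕ → ℕ) (n : ℕ) : List ℕ := (List.range n).map fun i => a (i + 1)

/-- The interval `B_k` determined by the digits `b`, `c` (`k ≥ 1`). -/
def Bset (b c : ℕ → ℕ) (k : ℕ) : Set ℝ :=
  hIco (cf (listOf b (k - 1) ++ [b k - 1]) + cf (listOf c (k - 1)))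
    (cf (listOf b k) + cf (listOf c (k - 1)))

/-- The interval `C_k` determined by the digits `b`, `c` (`k ≥ 1`). -/
def Cset (b c : ℕ → ℕ) (k : ℕ) : Set ℝ :=
  hIco (cf (listOf c k) + cf (listOf b k))
    (cf (listOf c (k - 1) ++ [c k + 1]) + cf (listOf b k))

/-- `A₀ = [0,1]` and `Aₙ = ⋂_{k=1}^{n} (B_k ∩ C_k)` for `n ≥ 1`. -/
def Aset (b c : ℕ → ℕ) : ℕ → Set ℝ
  | 0 => Set.Icc 0 1
  | n + 1 => ⋂ k ∈ Finset.Icc 1 (n + 1), (Bset b c k ∩ Cset b c k)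

/-- The denominators of the convergents of `[0; a 1, a 2, …]`:
`q₀ = 1`, `q₁ = a 1`, `q_k = a k * q_{k-1} + q_{k-2}`. -/
def qden (a : ℕ → ℕ) : ℕ → ℕ
  | 0 => 1
  | 1 => a 1
  | n + 2 => a (n + 2) * qden a (n + 1) + qden a n


def cm2 : List ℕ → (ℤ × ℤ) × (ℤ × ℤ)
  | [] => ((1, 0), (0, 1))
  | a :: l => ((cm2 l).2, ((cm2 l).1.1 + a * (cm2 l).2.1, (cm2 l).1.2 + a * (cm2 l).2.2))

lemma cm2_append (l : List ℕ) (x : ℕ) :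
    cm2 (l ++ [x]) = (((cm2 l).1.2, (cm2 l).1.1 + x * (cm2 l).1.2),
      ((cm2 l).2.2, (cm2 l).2.1 + x * (cm2 l).2.2)) := by
  induction l with
  | nil => simp [cm2]
  | cons a l ih =>
      simp only [List.cons_append, cm2, List.append_eq]
      rw [ih]
      simp only [Prod.ext_iff, Prod.fst, Prod.snd]
      norm_num
      ring

lemma cm2_reverse (l : List ℕ) :
    cm2 l.reverse = (((cm2 l).1.1, (cm2 l).2.1), ((cm2 l).1.2, (cm2 l).2.2)) := by
  induction l with
  | nil => simp [cm2]
  | cons a l ih => simp [cm2, List.reverse_cons, cm2_append, ih]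

lemma cm2_det (l : List ℕ) :
    (cm2 l).1.1 * (cm2 l).2.2 - (cm2 l).1.2 * (cm2 l).2.1 = (-1) ^ l.length := by
  induction l with
  | nil => simp [cm2]
  | cons a l ih => simp only [cm2, List.length_cons, pow_succ]; ring_nf; ring_nf at ih; linarith

lemma cm2_nonneg (l : List ℕ) :
    0 ≤ (cm2 l).1.1 ∧ 0 ≤ (cm2 l).1.2 ∧ 0 ≤ (cm2 l).2.1 ∧ 0 ≤ (cm2 l).2.2 := by
  induction l with
  | nil => simp [cm2]
  | cons a l ih =>
      obtain ⟨h1, h2, h3, h4⟩ := ih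
      simp only [cm2]
      refine ⟨h3, h4, ?_, ?_⟩ <;> positivity

lemma cm2_den_pos (l : List ℕ) (h : ∀ x ∈ l, 1 ≤ x) : 1 ≤ (cm2 l).2.2 := by
  induction l with
  | nil => simp [cm2]
  | cons a l ih =>
      have ha : (1 : ℤ) ≤ (a : ℤ) := by exact_mod_cast h a (by simp)
      have h1 := ih (fun x hx => h x (by simp [hx]))
      have h2 := (cm2_nonneg l).2.1
      simp only [cm2]
      nlinarith

lemma cf_eq (l : List ℕ) (h : ∀ x ∈ l, 1 ≤ x) :
    cf l = ((cm2 l).1.2 : ℝ) / ((cm2 l).2.2 : ℝ) := by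
  induction l with
  | nil => simp [cf, cm2]
  | cons a l ih =>
      have ha : (1 : ℕ) ≤ a := h a (by simp)
      have hq := cm2_den_pos l (fun x hx => h x (by simp [hx]))
      have hp := (cm2_nonneg l).2.1
      have hQR : (0 : ℝ) < ((cm2 l).2.2 : ℝ) := by exact_mod_cast hq
      have hPR : (0 : ℝ) ≤ ((cm2 l).1.2 : ℝ) := by exact_mod_cast hp
      have haR : (1 : ℝ) ≤ (a : ℝ) := by exact_mod_cast ha
      rw [cf, ih (fun x hx => h x (by simp [hx]))]
      simp only [cm2]
      have hden : (a : ℝ) + ((cm2 l).1.2 : ℝ) / ((cm2 l).2.2 : ℝ)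
          = (((cm2 l).1.2 : ℝ) + a * ((cm2 l).2.2 : ℝ)) / ((cm2 l).2.2 : ℝ) := by
        field_simp
        ring
      rw [hden, one_div_div]
      push_cast
      ring_nf



lemma frac_sub {p q r s d : ℤ} (hq : 0 < q) (hs : 0 < s) (h : p * s - r * q = d) :
    (p : ℝ) / q - (r : ℝ) / s = (d : ℝ) / (q * s) := by
  have hq' : (0:ℝ) < (q:ℝ) := by exact_mod_cast hq
  have hs' : (0:ℝ) < (s:ℝ) := by exact_mod_cast hs
  field_simp
  push_cast [← h]
  ring

lemma arith_final (bn cn QL QM s q : ℤ) (hQM : 1 ≤ QM) (hq : 0 < q)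
    (hsn : 0 ≤ QM + cn * s + s)
    (i1 : (q - QL) * q + 1 ≤ QM * (s + QM))
    (i2 : (QM + cn * s + s) * (s + QM) + 1 ≤ cn * ((QL + bn * q) * q)) :
    (cn + 1) * (s + QM) * (q - QL) * q < (bn + 1) * (cn * (QM * q)) * q := by
  nlinarith [mul_le_mul_of_nonneg_left i2 (by linarith : (0:ℤ) ≤ QM),
             mul_le_mul_of_nonneg_right i1 hsn]

lemma core (z : ℝ) (AL PL BL QL AM PM BM QM bm cm bn cn e v q w qn u s un sn : ℤ)
    (hv : v = AL + bm * PL) (hq : q = BL + bm * QL)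
    (hw : w = PL + bn * v) (hqn : qn = QL + bn * q)
    (hu : u = AM + cm * PM) (hs : s = BM + cm * QM)
    (hun : un = PM + cn * u) (hsn : sn = QM + cn * s)
    (hbm : 2 ≤ bm) (hcm : 1 ≤ cm) (hbn : 1 ≤ bn) (hcn : 1 ≤ cn)
    (hAL : 0 ≤ AL) (hPL : 0 ≤ PL) (hBL : 0 ≤ BL) (hQL : 1 ≤ QL)
    (hAM : 0 ≤ AM) (hPM : 0 ≤ PM) (hBM : 0 ≤ BM) (hQM : 1 ≤ QM)
    (he : e = 1 ∨ e = -1)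
    (hdL : AL * QL - PL * BL = e) (hdM : AM * QM - PM * BM = e)
    (hzB : z ∈ hIco (((v - PL : ℤ) : ℝ) / ((q - QL : ℤ) : ℝ) + (PM : ℝ) / (QM : ℝ))
      ((v : ℝ) / (q : ℝ) + (PM : ℝ) / (QM : ℝ)))
    (hzC : z ∈ hIco ((u : ℝ) / (s : ℝ) + (v : ℝ) / (q : ℝ))
      (((u + PM : ℤ) : ℝ) / ((s + QM : ℤ) : ℝ) + (v : ℝ) / (q : ℝ)))
    (hzCn : z ∈ hIco ((un : ℝ) / (sn : ℝ) + (w : ℝ) / (qn : ℝ))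
      (((un + u : ℤ) : ℝ) / ((sn + s : ℤ) : ℝ) + (w : ℝ) / (qn : ℝ))) :
    (cn + 1) * (s + QM) * (q - QL) < (bn + 1) * (cn * (QM * q)) := by
  -- positivity
  have hQL0 : (0:ℤ) ≤ QL := by linarith
  have hQM0 : (0:ℤ) ≤ QM := by linarith
  have h2Q : 2 * QL ≤ bm * QL := mul_le_mul_of_nonneg_right hbm hQL0
  have hqpos : 0 < q := by rw [hq]; linarith
  have hDpos : 0 < q - QL := by rw [hq]; linarith
  have h1S : 1 * QM ≤ cm * QM := mul_le_mul_of_nonneg_right hcm hQM0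
  have hspos : 0 < s := by rw [hs]; linarith
  have h1sn : 1 * s ≤ cn * s := mul_le_mul_of_nonneg_right hcn (by linarith)
  have hsnpos : 0 < sn := by rw [hsn]; linarith
  have h1qn : 1 * q ≤ bn * q := mul_le_mul_of_nonneg_right hbn (by linarith)
  have hqnpos : 0 < qn := by rw [hqn]; linarith
  have hsQMpos : 0 < s + QM := by linarith
  have hsnspos : 0 < sn + s := by linarith
  have hQMpos : 0 < QM := by linarith
  -- numerator identities
  have n1 : (v - PL) * q - v * (q - QL) = e := by
    linear_combination QL * hv - PL * hq + hdL
  have n2 : PM * (s + QM) - (u + PM) * QM = -e := by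
    linear_combination PM * hs - QM * hu - hdM
  have n4 : u * (s + QM) - (u + PM) * s = e := by
    linear_combination QM * hu - PM * hs + hdM
  have n5 : un * (sn + s) - (un + u) * sn = -e := by
    linear_combination s * hun - u * hsn + PM * hs - QM * hu - hdM
  have n6 : w * q - v * qn = -e := by
    linear_combination q * hw - v * hqn + PL * hq - QL * hv - hdL
  have n7 : (un + u) * (s + QM) - (u + PM) * (sn + s) = cn * e := by
    linear_combination (s + QM) * hun - (u + PM) * hsn + (cn * QM) * hu
      - (cn * PM) * hs + cn * hdM
  -- fraction differences
  have dBB := frac_sub hDpos hqpos n1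
  have dBC := frac_sub hQMpos hsQMpos n2
  have dC := frac_sub hspos hsQMpos n4
  have dCn := frac_sub hsnpos hsnspos n5
  have dBn := frac_sub hqnpos hqpos n6
  have dCnC := frac_sub hsnspos hsQMpos n7
  -- real cast positivity
  have hDR : (0:ℝ) < (q:ℝ) - QL := by exact_mod_cast hDpos
  have hqR : (0:ℝ) < (q:ℝ) := by exact_mod_cast hqpos
  have hsR : (0:ℝ) < (s:ℝ) := by exact_mod_cast hspos
  have hQMR : (0:ℝ) < (QM:ℝ) := by exact_mod_cast hQMpos
  have hsnR : (0:ℝ) < (sn:ℝ) := by exact_mod_cast hsnpos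
  have hqnR : (0:ℝ) < (qn:ℝ) := by exact_mod_cast hqnpos
  have hsQMR : (0:ℝ) < (s:ℝ) + QM := by exact_mod_cast hsQMpos
  have hsnsR : (0:ℝ) < (sn:ℝ) + s := by exact_mod_cast hsnspos
  have hcnR : (0:ℝ) < (cn:ℝ) := by exact_mod_cast (by linarith : (0:ℤ) < cn)
  push_cast at dBB dBC dC dCn dBn dCnC hzB hzC hzCn
  -- the two key inequalities
  have key : (1:ℝ) / (QM * ((s:ℝ) + QM)) < 1 / (((q:ℝ) - QL) * q) ∧
      (1:ℝ) / ((qn:ℝ) * q) < (cn:ℝ) / (((sn:ℝ) + s) * ((s:ℝ) + QM)) := by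
    have hinv1 : (0:ℝ) < 1 / (((q:ℝ) - QL) * q) := by positivity
    have hinv2 : (0:ℝ) < 1 / ((s:ℝ) * ((s:ℝ) + QM)) := by positivity
    have hinv3 : (0:ℝ) < 1 / ((sn:ℝ) * ((sn:ℝ) + s)) := by positivity
    rcases he with rfl | rfl
    · push_cast [neg_div, neg_neg, mul_one, mul_neg_one] at dBB dBC dC dCn dBn dCnC
      -- e = 1 : B = Ioc, C = Ioc, Cn = Ico
      unfold hIco at hzB hzC hzCn
      rw [if_neg (by push_cast; intro hc; linarith)] at hzB
      rw [if_neg (by push_cast; intro hc; linarith)] at hzC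
      rw [if_pos (by push_cast; linarith)] at hzCn
      simp only [Set.mem_Ioc, Set.mem_Ico] at hzB hzC hzCn
      push_cast at hzB hzC hzCn
      constructor
      · linarith [hzB.2, hzC.1]
      · linarith [hzC.1, hzCn.2]
    · push_cast [neg_div, neg_neg, mul_one, mul_neg_one] at dBB dBC dC dCn dBn dCnC
      -- e = -1 : B = Ico, C = Ico, Cn = Ioc
      unfold hIco at hzB hzC hzCn
      rw [if_pos (by push_cast; linarith)] at hzB
      rw [if_pos (by push_cast; linarith)] at hzC
      rw [if_neg (by push_cast; intro hc; linarith)] at hzCn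
      simp only [Set.mem_Ioc, Set.mem_Ico] at hzB hzC hzCn
      push_cast at hzB hzC hzCn
      constructor
      · linarith [hzB.1, hzC.2]
      · linarith [hzC.2, hzCn.1]
  obtain ⟨hkey1, hkey2⟩ := key
  -- convert to integer inequalities
  have i1r : ((q:ℝ) - QL) * q < (QM:ℝ) * ((s:ℝ) + QM) :=
    lt_of_one_div_lt_one_div (by positivity) hkey1
  have i2r : (1:ℝ) * (((sn:ℝ) + s) * ((s:ℝ) + QM)) < (cn:ℝ) * ((qn:ℝ) * q) :=
    (div_lt_div_iff₀ (by positivity) (by positivity)).mp hkey2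
  rw [one_mul] at i2r
  have i1 : (q - QL) * q < QM * (s + QM) := by exact_mod_cast i1r
  have i2 : (sn + s) * (s + QM) < cn * (qn * q) := by exact_mod_cast i2r
  have i1' : (q - QL) * q + 1 ≤ QM * (s + QM) := by linarith
  have i2' : (QM + cn * s + s) * (s + QM) + 1 ≤ cn * ((QL + bn * q) * q) := by
    rw [← hsn, ← hqn]; linarith
  have harith := arith_final bn cn QL QM s q hQM hqpos
    (by rw [← hsn]; linarith) i1' i2'
  exact lt_of_mul_lt_mul_right harith (le_of_lt hqpos)



lemma listOf_succ (a : ℕ → ℕ) (k : ℕ) : listOf a (k + 1) = listOf a k ++ [a (k + 1)] := by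
  simp [listOf, List.range_succ]

lemma listOf_one_le {a : ℕ → ℕ} {j : ℕ} (h : ∀ i, 1 ≤ i → i ≤ j → 1 ≤ a i) :
    ∀ x ∈ listOf a j, 1 ≤ x := by
  intro x hx
  simp only [listOf, List.mem_map, List.mem_range] at hx
  obtain ⟨i, hi, rfl⟩ := hx
  exact h (i + 1) (by omega) (by omega)


/-- if `B_{n−1} ∩ Cₙ ∩ C_{n−1} ≠ ∅` then
`bₙ > (1 + 1/cₙ)(c_{n−1} + 1 + [0;c_{n−2},…,c₁])(1 − [0;b_{n−1},…,b₁]) − 1`. -/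
theorem stmt15 (n : ℕ) (hn : 2 ≤ n) (b c : ℕ → ℕ)
    (hb : ∀ k : ℕ, 1 ≤ k → k ≤ n → 2 ≤ b k) (hc : ∀ k : ℕ, 1 ≤ k → k ≤ n → 1 ≤ c k)
    (h : (Bset b c (n - 1) ∩ Cset b c n ∩ Cset b c (n - 1)).Nonempty) :
    (b n : ℝ) > (1 + 1 / (c n : ℝ)) *
      ((c (n - 1) : ℝ) + 1 + cf (listOf c (n - 2)).reverse) *
      (1 - cf (listOf b (n - 1)).reverse) - 1 := by
  obtain ⟨k, rfl⟩ : ∃ k, n = k + 2 := ⟨n - 2, by omega⟩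
  have hb1 : 2 ≤ b (k + 1) := hb _ (by omega) (by omega)
  have hb2 : 2 ≤ b (k + 2) := hb _ (by omega) (by omega)
  have hc1 : 1 ≤ c (k + 1) := hc _ (by omega) (by omega)
  have hc2 : 1 ≤ c (k + 2) := hc _ (by omega) (by omega)
  -- entries of all the lists involved are ≥ 1
  have hbkE : ∀ x ∈ listOf b k, 1 ≤ x :=
    listOf_one_le (fun i h1 h2 => by have := hb i h1 (by omega); omega)
  have hbk1E : ∀ x ∈ listOf b (k + 1), 1 ≤ x :=
    listOf_one_le (fun i h1 h2 => by have := hb i h1 (by omega); omega)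
  have hbk2E : ∀ x ∈ listOf b (k + 2), 1 ≤ x :=
    listOf_one_le (fun i h1 h2 => by have := hb i h1 (by omega); omega)
  have hckE : ∀ x ∈ listOf c k, 1 ≤ x :=
    listOf_one_le (fun i h1 h2 => hc i h1 (by omega))
  have hck1E : ∀ x ∈ listOf c (k + 1), 1 ≤ x :=
    listOf_one_le (fun i h1 h2 => hc i h1 (by omega))
  have hck2E : ∀ x ∈ listOf c (k + 2), 1 ≤ x :=
    listOf_one_le (fun i h1 h2 => hc i h1 (by omega))
  have hBm1E : ∀ x ∈ listOf b k ++ [b (k + 1) - 1], 1 ≤ x := by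
    intro x hx
    rcases List.mem_append.mp hx with h' | h'
    · exact hbkE x h'
    · simp only [List.mem_singleton] at h'; omega
  have hCm1E : ∀ x ∈ listOf c k ++ [c (k + 1) + 1], 1 ≤ x := by
    intro x hx
    rcases List.mem_append.mp hx with h' | h'
    · exact hckE x h'
    · simp only [List.mem_singleton] at h'; omega
  have hCn1E : ∀ x ∈ listOf c (k + 1) ++ [c (k + 2) + 1], 1 ≤ x := by
    intro x hx
    rcases List.mem_append.mp hx with h' | h'
    · exact hck1E x h'
    · simp only [List.mem_singleton] at h'; omega
  have hrevCE : ∀ x ∈ (listOf c k).reverse, 1 ≤ x :=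
    fun x hx => hckE x (List.mem_reverse.mp hx)
  have hrevBE : ∀ x ∈ (listOf b (k + 1)).reverse, 1 ≤ x :=
    fun x hx => hbk1E x (List.mem_reverse.mp hx)
  -- continuant matrices
  rcases hML : cm2 (listOf b k) with ⟨⟨AL, PL⟩, BL, QL⟩
  rcases hMM : cm2 (listOf c k) with ⟨⟨AM, PM⟩, BM, QM⟩
  have hlenL : (listOf b k).length = k := by simp [listOf]
  have hlenM : (listOf c k).length = k := by simp [listOf]
  have hdL : AL * QL - PL * BL = (-1 : ℤ) ^ k := by
    have hd := cm2_det (listOf b k); rw [hML, hlenL] at hd; exact hd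
  have hdM : AM * QM - PM * BM = (-1 : ℤ) ^ k := by
    have hd := cm2_det (listOf c k); rw [hMM, hlenM] at hd; exact hd
  have hAL0 : (0:ℤ) ≤ AL := by have hd := (cm2_nonneg (listOf b k)).1; rw [hML] at hd; exact hd
  have hPL0 : (0:ℤ) ≤ PL := by have hd := (cm2_nonneg (listOf b k)).2.1; rw [hML] at hd; exact hd
  have hBL0 : (0:ℤ) ≤ BL := by have hd := (cm2_nonneg (listOf b k)).2.2.1; rw [hML] at hd; exact hd
  have hAM0 : (0:ℤ) ≤ AM := by have hd := (cm2_nonneg (listOf c k)).1; rw [hMM] at hd; exact hd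
  have hPM0 : (0:ℤ) ≤ PM := by have hd := (cm2_nonneg (listOf c k)).2.1; rw [hMM] at hd; exact hd
  have hBM0 : (0:ℤ) ≤ BM := by have hd := (cm2_nonneg (listOf c k)).2.2.1; rw [hMM] at hd; exact hd
  have hQL1 : (1:ℤ) ≤ QL := by have hd := cm2_den_pos _ hbkE; rw [hML] at hd; exact hd
  have hQM1 : (1:ℤ) ≤ QM := by have hd := cm2_den_pos _ hckE; rw [hMM] at hd; exact hd
  -- matrices of the one-step extended lists
  have hML1 : cm2 (listOf b (k + 1)) =
      ((PL, AL + (b (k + 1) : ℤ) * PL), (QL, BL + (b (k + 1) : ℤ) * QL)) := by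
    rw [listOf_succ, cm2_append, hML]
  have hMM1 : cm2 (listOf c (k + 1)) =
      ((PM, AM + (c (k + 1) : ℤ) * PM), (QM, BM + (c (k + 1) : ℤ) * QM)) := by
    rw [listOf_succ, cm2_append, hMM]
  -- the continued fraction values
  have cfM : cf (listOf c k) = (PM : ℝ) / (QM : ℝ) := by
    simp only [cf_eq _ hckE, hMM]
  have cfB : cf (listOf b (k + 1)) =
      ((AL + (b (k + 1) : ℤ) * PL : ℤ) : ℝ) / ((BL + (b (k + 1) : ℤ) * QL : ℤ) : ℝ) := by
    simp only [cf_eq _ hbk1E, hML1]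
  have cfB' : cf (listOf b k ++ [b (k + 1) - 1]) =
      ((AL + (b (k + 1) : ℤ) * PL - PL : ℤ) : ℝ)
        / ((BL + (b (k + 1) : ℤ) * QL - QL : ℤ) : ℝ) := by
    have hcast : ((b (k + 1) - 1 : ℕ) : ℤ) = (b (k + 1) : ℤ) - 1 := by omega
    simp only [cf_eq _ hBm1E, cm2_append, hML]
    push_cast [hcast]
    ring_nf
  have cfBn : cf (listOf b (k + 2)) =
      ((PL + (b (k + 2) : ℤ) * (AL + (b (k + 1) : ℤ) * PL) : ℤ) : ℝ)
        / ((QL + (b (k + 2) : ℤ) * (BL + (b (k + 1) : ℤ) * QL) : ℤ) : ℝ) := by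
    have hsplit : listOf b (k + 2) = listOf b (k + 1) ++ [b (k + 2)] := by
      simpa using listOf_succ b (k + 1)
    rw [cf_eq _ hbk2E, hsplit, cm2_append, hML1]
  have cfC : cf (listOf c (k + 1)) =
      ((AM + (c (k + 1) : ℤ) * PM : ℤ) : ℝ) / ((BM + (c (k + 1) : ℤ) * QM : ℤ) : ℝ) := by
    simp only [cf_eq _ hck1E, hMM1]
  have cfC' : cf (listOf c k ++ [c (k + 1) + 1]) =
      ((AM + (c (k + 1) : ℤ) * PM + PM : ℤ) : ℝ)
        / ((BM + (c (k + 1) : ℤ) * QM + QM : ℤ) : ℝ) := by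
    simp only [cf_eq _ hCm1E, cm2_append, hMM]
    push_cast
    ring_nf
  have cfCn : cf (listOf c (k + 2)) =
      ((PM + (c (k + 2) : ℤ) * (AM + (c (k + 1) : ℤ) * PM) : ℤ) : ℝ)
        / ((QM + (c (k + 2) : ℤ) * (BM + (c (k + 1) : ℤ) * QM) : ℤ) : ℝ) := by
    have hsplit : listOf c (k + 2) = listOf c (k + 1) ++ [c (k + 2)] := by
      simpa using listOf_succ c (k + 1)
    rw [cf_eq _ hck2E, hsplit, cm2_append, hMM1]
  have cfCn' : cf (listOf c (k + 1) ++ [c (k + 2) + 1]) =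
      ((PM + (c (k + 2) : ℤ) * (AM + (c (k + 1) : ℤ) * PM)
          + (AM + (c (k + 1) : ℤ) * PM) : ℤ) : ℝ)
        / ((QM + (c (k + 2) : ℤ) * (BM + (c (k + 1) : ℤ) * QM)
          + (BM + (c (k + 1) : ℤ) * QM) : ℤ) : ℝ) := by
    simp only [cf_eq _ hCn1E, cm2_append, hMM1]
    push_cast
    ring_nf
  have cfrevC : cf (listOf c k).reverse = (BM : ℝ) / (QM : ℝ) := by
    simp only [cf_eq _ hrevCE, cm2_reverse, hMM]
  have cfrevB : cf (listOf b (k + 1)).reverse =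
      (QL : ℝ) / ((BL + (b (k + 1) : ℤ) * QL : ℤ) : ℝ) := by
    simp only [cf_eq _ hrevBE, cm2_reverse, hML1]
  -- extract the memberships
  obtain ⟨z, ⟨hzB, hzCn⟩, hzC⟩ := h
  rw [show k + 2 - 1 = k + 1 from rfl] at hzB hzC
  unfold Bset at hzB
  unfold Cset at hzC hzCn
  rw [show k + 1 - 1 = k from rfl] at hzB hzC
  rw [show k + 2 - 1 = k + 1 from rfl] at hzCn
  rw [cfB', cfM, cfB] at hzB
  rw [cfC, cfB, cfC'] at hzC
  rw [cfCn, cfBn, cfCn'] at hzCn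
  -- parity
  have he : ((-1 : ℤ) ^ k = 1) ∨ ((-1 : ℤ) ^ k = -1) := by
    rcases Nat.even_or_odd k with h' | h'
    · exact Or.inl h'.neg_one_pow
    · exact Or.inr h'.neg_one_pow
  have hbmZ : (2 : ℤ) ≤ (b (k + 1) : ℤ) := by exact_mod_cast hb1
  have hbnZ : (1 : ℤ) ≤ (b (k + 2) : ℤ) := by exact_mod_cast (by omega : 1 ≤ b (k + 2))
  have hcmZ : (1 : ℤ) ≤ (c (k + 1) : ℤ) := by exact_mod_cast hc1
  have hcnZ : (1 : ℤ) ≤ (c (k + 2) : ℤ) := by exact_mod_cast hc2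
  have hcore := core z AL PL BL QL AM PM BM QM
    ((b (k + 1) : ℤ)) ((c (k + 1) : ℤ)) ((b (k + 2) : ℤ)) ((c (k + 2) : ℤ)) ((-1 : ℤ) ^ k)
    _ _ _ _ _ _ _ _ rfl rfl rfl rfl rfl rfl rfl rfl
    hbmZ hcmZ hbnZ hcnZ hAL0 hPL0 hBL0 hQL1 hAM0 hPM0 hBM0 hQM1 he hdL hdM hzB hzC hzCn
  -- final conversion
  rw [show k + 2 - 1 = k + 1 from rfl, show k + 2 - 2 = k from rfl, cfrevC, cfrevB,
    gt_iff_lt, sub_lt_iff_lt_add]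
  -- positivity for the denominators
  have hqZ : (0 : ℤ) < BL + (b (k + 1) : ℤ) * QL := by nlinarith
  have hqR : (0 : ℝ) < ((BL + (b (k + 1) : ℤ) * QL : ℤ) : ℝ) := by exact_mod_cast hqZ
  have hQMR : (0 : ℝ) < (QM : ℝ) := by exact_mod_cast (by linarith : (0:ℤ) < QM)
  have hcnR : (0 : ℝ) < ((c (k + 2) : ℕ) : ℝ) := by
    exact_mod_cast (by omega : 0 < c (k + 2))
  have heq : (1 + 1 / ((c (k + 2) : ℕ) : ℝ)) * (((c (k + 1) : ℕ) : ℝ) + 1 + (BM : ℝ) / QM) *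
      (1 - (QL : ℝ) / ((BL + (b (k + 1) : ℤ) * QL : ℤ) : ℝ)) =
      ((((c (k + 2) : ℤ) + 1) * (BM + (c (k + 1) : ℤ) * QM + QM)
          * (BL + (b (k + 1) : ℤ) * QL - QL) : ℤ) : ℝ)
        / (((c (k + 2) : ℤ) * (QM * (BL + (b (k + 1) : ℤ) * QL)) : ℤ) : ℝ) := by
    have h1 : ((c (k + 2) : ℕ) : ℝ) ≠ 0 := ne_of_gt hcnR
    have h2 : (QM : ℝ) ≠ 0 := ne_of_gt hQMR
    have h3 : ((BL + (b (k + 1) : ℤ) * QL : ℤ) : ℝ) ≠ 0 := ne_of_gt hqR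
    push_cast at h3 ⊢
    field_simp
    ring
  rw [heq, div_lt_iff₀ (by push_cast at hqR ⊢; positivity)]
  exact_mod_cast hcore


end ShulgaPaper
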